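/- Let n ≥ 1 and let z₁,…,zₙ, w₁,…,wₙ ∈ ℂ with wⱼ ≠ 0 for all j and Im(wᵢ·conj(wⱼ)) ≠ 0 for all i ≠ j. Then Im((z₁⋯zₙ)/(w₁⋯wₙ)) = Σ_{j=1}^{n} ( ∏_{i=1}^{n} Im(zᵢ/wⱼ) ) / ( ∏_{i≠j} Im(wᵢ/wⱼ) ). -/

import Mathlib

namespace EGG

/-- Integer vectors in `ℤ³`. -/
abbrev V : Type := Fin 3 → ℤ

/-- gcd of the three coordinates. -/
def gcd3 (v : V) : ℕ := Nat.gcd (Nat.gcd (v 0).natAbs (v 1).natAbs) (v 2).natAbs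

/-- A vector of `ℤ³` is primitive if it is nonzero and the gcd of its coordinates is 1. -/
def Primitive (a : V) : Prop := a ≠ 0 ∧ gcd3 a = 1

/-- Cross product of integer vectors. -/
def cross (a b : V) : V :=
  ![a 1 * b 2 - a 2 * b 1, a 2 * b 0 - a 0 * b 2, a 0 * b 1 - a 1 * b 0]

/-- Dot product of integer vectors. -/
def dotZ (α a : V) : ℤ := α 0 * a 0 + α 1 * a 1 + α 2 * a 2

/-- Dot product of a rational vector with an integer vector. -/
def dotQ (α : Fin 3 → ℚ) (a : V) : ℚ := α 0 * (a 0 : ℚ) + α 1 * (a 1 : ℚ) + α 2 * (a 2 : ℚ)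

/-- Dot product of a real vector with an integer vector. -/
def dotR (l : Fin 3 → ℝ) (a : V) : ℝ := l 0 * (a 0 : ℝ) + l 1 * (a 1 : ℝ) + l 2 * (a 2 : ℝ)

/-- The pairing `α(x) = α₁x₁+α₂x₂+α₃x₃` of a rational vector with a complex vector. -/
noncomputable def pairQ (α : Fin 3 → ℚ) (x : Fin 3 → ℂ) : ℂ :=
  (α 0 : ℂ) * x 0 + (α 1 : ℂ) * x 1 + (α 2 : ℂ) * x 2

/-- The pairing `α(x) = α₁x₁+α₂x₂+α₃x₃` of an integer vector with a complex vector. -/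
noncomputable def pairZ (α : V) (x : Fin 3 → ℂ) : ℂ :=
  (α 0 : ℂ) * x 0 + (α 1 : ℂ) * x 1 + (α 2 : ℂ) * x 2

/-- The canonical map `ℤ³ → ℚ³`. -/
def toQ (a : V) : Fin 3 → ℚ := fun i => (a i : ℚ)

/-- Determinant of the 3×3 matrix with rows `α, β, δ`. -/
def det3Q (α β δ : Fin 3 → ℚ) : ℚ := Matrix.det (Matrix.of ![α, β, δ])

/-- `(α, β)` is an oriented basis of the plane `H(a) = {α : α·a = 0}`. -/
def IsOrientedBasis (a : V) (α β : Fin 3 → ℚ) : Prop :=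
  dotQ α a = 0 ∧ dotQ β a = 0 ∧
  LinearIndependent ℚ ![α, β] ∧
  (∀ δ : Fin 3 → ℚ, dotQ δ a = 0 → ∃ p q : ℚ, δ = p • α + q • β) ∧
  (∀ δ : Fin 3 → ℚ, 0 < dotQ δ a → 0 < det3Q α β δ)

/-- The domain `U⁺_a ⊆ ℂ³`. -/
noncomputable def UPlus (a : V) : Set (Fin 3 → ℂ) :=
  {x | ∃ α β : Fin 3 → ℚ, IsOrientedBasis a α β ∧
    0 < (pairQ α x * (starRingEnd ℂ) (pairQ β x)).im}

/-- `γ` is the direction vector of the wedge `(a,b)`: `γ` is primitive and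
`a × b = s • γ` for some integer `s ≥ 1` (the modulus). -/
def IsDirVec (a b γ : V) : Prop :=
  Primitive γ ∧ ∃ s : ℤ, 1 ≤ s ∧ cross a b = s • γ

/-- `C₊₋(a,b) = {δ ∈ ℤ³ : δ·a > 0, δ·b ≤ 0}`. -/
def Cpm (a b : V) : Set V := {δ | 0 < dotZ δ a ∧ dotZ δ b ≤ 0}

/-- `C₋₊(a,b) = {δ ∈ ℤ³ : δ·a ≤ 0, δ·b > 0}`. -/
def Cmp (a b : V) : Set V := {δ | dotZ δ a ≤ 0 ∧ 0 < dotZ δ b}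

/-- The factor `1 - e^{-2πi(δ(x)-w)/γ(x)}` appearing in the numerator of `Γ_{a,b}`. -/
noncomputable def gammaFacP (γ : V) (x : Fin 3 → ℂ) (w : ℂ) (δ : V) : ℂ :=
  1 - Complex.exp (-(2 * (Real.pi : ℂ) * Complex.I) * (pairZ δ x - w) / pairZ γ x)

/-- The factor `1 - e^{2πi(δ(x)-w)/γ(x)}` appearing in the denominator of `Γ_{a,b}`. -/
noncomputable def gammaFacM (γ : V) (x : Fin 3 → ℂ) (w : ℂ) (δ : V) : ℂ :=
  1 - Complex.exp ((2 * (Real.pi : ℂ) * Complex.I) * (pairZ δ x - w) / pairZ γ x)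

/-- The gamma function `Γ_{a,b}(w,x)` of the wedge `(a,b)` with direction vector `γ`:
the products run over the sets `C₊₋(a,b)/ℤγ` and `C₋₊(a,b)/ℤγ`; each factor is evaluated
on the chosen representative `Quotient.out q` of the class `q` (the factors are constant
on classes modulo `ℤγ`). -/
noncomputable def GammaWedge (a b γ : V) (w : ℂ) (x : Fin 3 → ℂ) : ℂ :=
  if a = b then 1 else
    (∏' q : (QuotientAddGroup.mk '' Cpm a b : Set (V ⧸ AddSubgroup.zmultiples γ)),
      gammaFacP γ x w (Quotient.out (q : V ⧸ AddSubgroup.zmultiples γ))) /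
    (∏' q : (QuotientAddGroup.mk '' Cmp a b : Set (V ⧸ AddSubgroup.zmultiples γ)),
      gammaFacM γ x w (Quotient.out (q : V ⧸ AddSubgroup.zmultiples γ)))

/-- The theta function `θ₀(z,τ)`, for `Im τ > 0`. -/
noncomputable def theta0 (z τ : ℂ) : ℂ :=
  ∏' j : ℕ, ((1 - Complex.exp (2 * (Real.pi : ℂ) * Complex.I * (((j : ℂ) + 1) * τ - z))) *
    (1 - Complex.exp (2 * (Real.pi : ℂ) * Complex.I * ((j : ℂ) * τ + z))))

/-- The elliptic gamma function `Γ(z,τ,σ)`, for `Im τ > 0` and `Im σ > 0`. -/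
noncomputable def ellGamma (z τ σ : ℂ) : ℂ :=
  (∏' p : ℕ × ℕ, (1 - Complex.exp (2 * (Real.pi : ℂ) * Complex.I *
      (((p.1 : ℂ) + 1) * τ + ((p.2 : ℂ) + 1) * σ - z)))) /
  (∏' p : ℕ × ℕ, (1 - Complex.exp (2 * (Real.pi : ℂ) * Complex.I *
      ((p.1 : ℂ) * τ + (p.2 : ℂ) * σ + z))))

/-- The elliptic gamma function `Γ̃(z,τ,σ)` in the domain `Im τ < 0 < Im σ`. -/
noncomputable def ellGammaTilde (z τ σ : ℂ) : ℂ :=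
  (∏' p : ℕ × ℕ, (1 - Complex.exp (2 * (Real.pi : ℂ) * Complex.I *
      (z - ((p.1 : ℂ) + 1) * τ + (p.2 : ℂ) * σ)))) /
  (∏' p : ℕ × ℕ, (1 - Complex.exp (2 * (Real.pi : ℂ) * Complex.I *
      (-z - (p.1 : ℂ) * τ + ((p.2 : ℂ) + 1) * σ))))

/-- The polynomial `P₂`. -/
noncomputable def P2 (w x₁ x₂ : ℂ) : ℂ :=
  (w ^ 2 - (x₁ + x₂) * w + (x₁ ^ 2 + x₂ ^ 2 + 3 * x₁ * x₂) / 6) / (x₁ * x₂)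

/-- The Bernoulli polynomial `P₃ = B₃,₃`. -/
noncomputable def P3 (w x₁ x₂ x₃ : ℂ) : ℂ :=
  w ^ 3 / (x₁ * x₂ * x₃) - (3 * (x₁ + x₂ + x₃) / (2 * (x₁ * x₂ * x₃))) * w ^ 2
    + ((x₁ ^ 2 + x₂ ^ 2 + x₃ ^ 2 + 3 * x₁ * x₂ + 3 * x₂ * x₃ + 3 * x₁ * x₃)
        / (2 * (x₁ * x₂ * x₃))) * w
    - (1 / 4) * (x₁ + x₂ + x₃) * (1 / x₁ + 1 / x₂ + 1 / x₃)

/-- The real polynomial `R₃ = B₂,₃`. -/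
noncomputable def R3 (ζ t s : ℝ) : ℝ :=
  ζ ^ 3 / (t * s) - (3 / 2) * (1 / t + 1 / s) * ζ ^ 2
    + (t / (2 * s) + s / (2 * t) + 3 / 2) * ζ - (t + s) / 4

/-- The hermitian weight `h₂(z,τ)` for the theta bundle. -/
noncomputable def h2 (z τ : ℂ) : ℝ :=
  Real.exp (-2 * Real.pi * z.im ^ 2 / τ.im + 2 * Real.pi * (z - τ / 6).im)

/-- The hermitian weight `h₃(z,τ,σ)`. -/
noncomputable def h3 (z τ σ : ℂ) : ℝ :=
  Real.exp (-(2 * Real.pi / 3) * R3 z.im τ.im σ.im)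

/-- The finite product of theta functions `Δ` with parameters `A₁ = α₁(x)`, `A₂ = α₂(x)`,
`A₃ = α₃(x)` and first framing coordinate `m = μ(a)`:
`∏_{j=0}^{m-1} θ₀((w+jA₁)/A₃, A₂/A₃)` for `m ≥ 0` and
`(∏_{j=m}^{-1} θ₀((w+jA₁)/A₃, A₂/A₃))⁻¹` for `m < 0`. -/
noncomputable def DeltaInt (w A₁ A₂ A₃ : ℂ) (m : ℤ) : ℂ :=
  if 0 ≤ m then
    ∏ j ∈ Finset.range m.toNat, theta0 ((w + (j : ℂ) * A₁) / A₃) (A₂ / A₃)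
  else
    (∏ j ∈ Finset.range (-m).toNat, theta0 ((w - ((j : ℂ) + 1) * A₁) / A₃) (A₂ / A₃))⁻¹


section AuxStatement9
open Polynomial Finset Complex

private lemma keyLagrange {n : ℕ} (Z Zc W Wc : Fin n → ℂ) (hWc : ∀ j, Wc j ≠ 0)
    (hD : ∀ i j : Fin n, i ≠ j → W i * Wc j - Wc i * W j ≠ 0) :
    (∏ i, Z i) - ((∏ i, Zc i) / (∏ i, Wc i)) * ∏ i, W i =
      ∑ j, (∏ i, (Z i - Zc i * (W j / Wc j))) *
        ∏ k ∈ univ.erase j, ((W j / Wc j - W k / Wc k)⁻¹ * (0 - W k / Wc k)) := by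
  set t : Fin n → ℂ := fun j => W j / Wc j with ht
  have htinj : Set.InjOn t (univ : Finset (Fin n)) := by
    intro j _ k _ h
    by_contra hjk
    apply hD j k hjk
    rw [ht] at h
    simp only at h
    rw [div_eq_div_iff (hWc j) (hWc k)] at h
    linear_combination h
  set c : ℂ := (∏ i, Zc i) / (∏ i, Wc i) with hc
  set Q : ℂ[X] := (∏ i, (C (Z i) - C (Zc i) * X)) - C c * ∏ j, (C (W j) - C (Wc j) * X)
    with hQ
  clear_value t c Q
  have hlin : ∀ (a b : ℂ), (C a - C b * X : ℂ[X]).natDegree ≤ 1 := by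
    intro a b
    refine le_trans (natDegree_sub_le _ _) (max_le (by simp)
      (le_trans (natDegree_C_mul_le _ _) (by simp)))
  have hcoeff1 : ∀ (a b : ℂ), (C a - C b * X : ℂ[X]).coeff 1 = -b := by
    intro a b; simp [coeff_sub]
  have hQdeg : Q.degree < (univ : Finset (Fin n)).card := by
    rw [degree_lt_iff_coeff_zero]
    intro m hm
    simp only [card_univ, Fintype.card_fin] at hm
    rcases eq_or_lt_of_le hm with hm | hm
    · -- m = n
      subst hm
      have h1 := coeff_prod_of_natDegree_le (univ : Finset (Fin n))
        (fun i => (C (Z i) - C (Zc i) * X : ℂ[X])) 1 (fun p _ => hlin _ _)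
      have h2 := coeff_prod_of_natDegree_le (univ : Finset (Fin n))
        (fun i => (C (W i) - C (Wc i) * X : ℂ[X])) 1 (fun p _ => hlin _ _)
      simp only [card_univ, Fintype.card_fin, mul_one] at h1 h2
      have hWcprod : (∏ i, Wc i) ≠ 0 := prod_ne_zero_iff.mpr (fun i _ => hWc i)
      simp only [hQ, coeff_sub, coeff_C_mul, h1, h2, hcoeff1]
      have hneg : ∀ f : Fin n → ℂ, (∏ i, -f i) = (-1 : ℂ) ^ n * ∏ i, f i := by
        intro f
        calc (∏ i, -f i) = ∏ i, (-1 : ℂ) * f i := by simp only [neg_one_mul]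
          _ = (-1 : ℂ) ^ n * ∏ i, f i := by
              rw [Finset.prod_mul_distrib, Finset.prod_const, card_univ, Fintype.card_fin]
      rw [hneg, hneg]
      have hcm : c * ((-1 : ℂ) ^ n * ∏ i, Wc i) = (-1 : ℂ) ^ n * ∏ i, Zc i := by
        rw [hc]
        field_simp
      linear_combination -hcm
    · -- m > n
      apply coeff_eq_zero_of_natDegree_lt
      refine lt_of_le_of_lt ?_ hm
      rw [hQ]
      refine le_trans (natDegree_sub_le _ _) ?_
      simp only [max_le_iff]
      constructor
      · refine le_trans (natDegree_prod_le _ _) ?_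
        calc ∑ i : Fin n, (C (Z i) - C (Zc i) * X : ℂ[X]).natDegree
            ≤ ∑ _i : Fin n, 1 := Finset.sum_le_sum (fun i _ => hlin _ _)
          _ = n := by simp
      · refine le_trans (natDegree_mul_le) ?_
        simp only [natDegree_C, zero_add]
        refine le_trans (natDegree_prod_le _ _) ?_
        calc ∑ i : Fin n, (C (W i) - C (Wc i) * X : ℂ[X]).natDegree
            ≤ ∑ _i : Fin n, 1 := Finset.sum_le_sum (fun i _ => hlin _ _)
          _ = n := by simp
  have hinterp := Lagrange.eq_interpolate htinj hQdeg
  have := congrArg (eval 0) hinterp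
  rw [Lagrange.interpolate_apply] at this
  simp only [eval_finset_sum, eval_mul, eval_C, Lagrange.basis, eval_prod,
    Lagrange.basisDivisor, eval_mul, eval_C, eval_sub, eval_X] at this
  -- compute Q.eval 0
  have hQ0 : Q.eval 0 = (∏ i, Z i) - c * ∏ i, W i := by
    simp [hQ, eval_prod]
  -- compute Q.eval (t j)
  have hQt : ∀ j, Q.eval (t j) = ∏ i, (Z i - Zc i * t j) := by
    intro j
    have hz : (∏ k, (C (W k) - C (Wc k) * X : ℂ[X])).eval (t j) = 0 := by
      rw [eval_prod]
      refine Finset.prod_eq_zero (mem_univ j) ?_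
      simp only [eval_sub, eval_mul, eval_C, eval_X, ht]
      show W j - Wc j * (W j / Wc j) = 0
      rw [mul_div_cancel₀ _ (hWc j), sub_self]
    simp [hQ, eval_prod, hz]
  rw [hQ0] at this
  rw [this]
  refine Finset.sum_congr rfl (fun j _ => ?_)
  rw [hQt j]
  simp only [ht]

set_option maxHeartbeats 2000000 in
/-- the residue identity
`Im(z₁⋯zₙ/w₁⋯wₙ) = Σⱼ (Πᵢ Im(zᵢ/wⱼ)) / (Π_{i≠j} Im(wᵢ/wⱼ))`. -/
theorem statement9 (n : ℕ) (hn : 1 ≤ n) (z w : Fin n → ℂ)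
    (hw0 : ∀ j, w j ≠ 0)
    (hw : ∀ i j, i ≠ j → (w i * (starRingEnd ℂ) (w j)).im ≠ 0) :
    ((∏ i, z i) / ∏ i, w i).im =
      ∑ j, (∏ i, (z i / w j).im) / ∏ i ∈ Finset.univ.erase j, (w i / w j).im := by
  obtain ⟨m, rfl⟩ : ∃ m, n = m + 1 := ⟨n - 1, (Nat.succ_pred_eq_of_pos hn).symm⟩
  set Zc : Fin (m + 1) → ℂ := fun i => (starRingEnd ℂ) (z i) with hZc
  set Wc : Fin (m + 1) → ℂ := fun j => (starRingEnd ℂ) (w j) with hWcdef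
  have hWc : ∀ j, Wc j ≠ 0 := fun j => by
    simp only [hWcdef]; exact (_root_.map_ne_zero _).mpr (hw0 j)
  have hD : ∀ i j : Fin (m + 1), i ≠ j → w i * Wc j - Wc i * w j ≠ 0 := by
    intro i j hij h
    apply hw i j hij
    rw [sub_eq_zero] at h
    have h2 : (starRingEnd ℂ) (w i * Wc j) = w i * Wc j := by
      rw [map_mul]
      simp only [hWcdef, Complex.conj_conj]
      rw [← h]
    exact (Complex.conj_eq_iff_im.mp h2)
  have hI : (2 * Complex.I : ℂ) ≠ 0 := by simp [Complex.I_ne_zero]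
  have him : ∀ u : ℂ, (u.im : ℂ) = (u - (starRingEnd ℂ) u) / (2 * Complex.I) := by
    intro u
    rw [Complex.sub_conj]
    field_simp
    push_cast
    ring
  apply Complex.ofReal_injective
  push_cast
  simp only [him, map_div₀, map_prod]
  -- now everything is complex
  have hWprod : (∏ i, w i) ≠ 0 := prod_ne_zero_iff.mpr (fun i _ => hw0 i)
  have hWcprod : (∏ i, Wc i) ≠ 0 := prod_ne_zero_iff.mpr (fun i _ => hWc i)
  have key := keyLagrange z Zc w Wc hWc hD
  have lhs_eq : ((∏ i, z i) / (∏ i, w i) - (∏ i, Zc i) / (∏ i, Wc i)) / (2 * Complex.I) =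
      ((∏ i, z i) - ((∏ i, Zc i) / (∏ i, Wc i)) * ∏ i, w i) / (2 * Complex.I * ∏ i, w i) := by
    field_simp
  rw [show (∏ i, (starRingEnd ℂ) (z i)) = ∏ i, Zc i from rfl,
      show (∏ i, (starRingEnd ℂ) (w i)) = ∏ i, Wc i from rfl] at *
  rw [lhs_eq, key, Finset.sum_div]
  refine Finset.sum_congr rfl (fun j _ => ?_)
  -- per-term identity
  set N : Fin (m + 1) → ℂ := fun i => z i * Wc j - Zc i * w j with hN
  set D : Fin (m + 1) → ℂ := fun k => w k * Wc j - Wc k * w j with hDdef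
  have hDk : ∀ k ∈ univ.erase j, D k ≠ 0 := by
    intro k hk
    exact hD k j (Finset.ne_of_mem_erase hk)
  have hDprod : (∏ k ∈ univ.erase j, D k) ≠ 0 := prod_ne_zero_iff.mpr hDk
  -- rewrite numerator factors on LHS
  have e1 : (∏ i, (z i - Zc i * (w j / Wc j))) = (∏ i, N i) / Wc j ^ (m + 1) := by
    rw [show (∏ i, (z i - Zc i * (w j / Wc j))) = ∏ i, (N i / Wc j) from
      Finset.prod_congr rfl (fun i _ => by rw [hN]; field_simp [hWc j]; try ring)]
    rw [Finset.prod_div_distrib, Finset.prod_const, card_univ, Fintype.card_fin]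
  have e2 : (∏ k ∈ univ.erase j, ((w j / Wc j - w k / Wc k)⁻¹ * (0 - w k / Wc k))) =
      (Wc j ^ m * ∏ k ∈ univ.erase j, w k) / ∏ k ∈ univ.erase j, D k := by
    rw [show (∏ k ∈ univ.erase j, ((w j / Wc j - w k / Wc k)⁻¹ * (0 - w k / Wc k))) =
        ∏ k ∈ univ.erase j, (Wc j * w k / D k) from Finset.prod_congr rfl (fun k hk => ?_)]
    · rw [Finset.prod_div_distrib, Finset.prod_mul_distrib, Finset.prod_const,
        Finset.card_erase_of_mem (mem_univ j), card_univ, Fintype.card_fin,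
        Nat.add_sub_cancel]
    · have hsub : w j / Wc j - w k / Wc k = -(D k) / (Wc j * Wc k) := by
        rw [hDdef]
        field_simp [hWc j, hWc k]
        ring
      rw [hsub, inv_div]
      field_simp [hWc k, hWc j, hDk k hk]
      try ring
  -- rewrite RHS factors
  have e3 : (∏ i, ((z i / w j - Zc i / Wc j) / (2 * Complex.I))) =
      (∏ i, N i) / (2 * Complex.I * (w j * Wc j)) ^ (m + 1) := by
    rw [show (∏ i, ((z i / w j - Zc i / Wc j) / (2 * Complex.I))) =
        ∏ i, (N i / (2 * Complex.I * (w j * Wc j))) from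
      Finset.prod_congr rfl (fun i _ => by rw [hN]; field_simp [hw0 j, hWc j, hI])]
    rw [Finset.prod_div_distrib, Finset.prod_const, card_univ, Fintype.card_fin]
  have e4 : (∏ k ∈ univ.erase j, ((w k / w j - Wc k / Wc j) / (2 * Complex.I))) =
      (∏ k ∈ univ.erase j, D k) / (2 * Complex.I * (w j * Wc j)) ^ m := by
    rw [show (∏ k ∈ univ.erase j, ((w k / w j - Wc k / Wc j) / (2 * Complex.I))) =
        ∏ k ∈ univ.erase j, (D k / (2 * Complex.I * (w j * Wc j))) from
      Finset.prod_congr rfl (fun k _ => by rw [hDdef]; field_simp [hw0 j, hWc j, hI])]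
    rw [Finset.prod_div_distrib, Finset.prod_const,
      Finset.card_erase_of_mem (mem_univ j), card_univ, Fintype.card_fin,
      Nat.add_sub_cancel]
  rw [e1, e2, e3, e4]
  have hup : (∏ i, w i) = w j * ∏ k ∈ univ.erase j, w k :=
    (Finset.mul_prod_erase univ w (mem_univ j)).symm
  rw [hup]
  have hPW : (∏ k ∈ univ.erase j, w k) ≠ 0 :=
    prod_ne_zero_iff.mpr (fun k _ => hw0 k)
  set PN : ℂ := ∏ i, N i with hPN
  set PD : ℂ := ∏ k ∈ univ.erase j, D k with hPDdef
  set PW : ℂ := ∏ k ∈ univ.erase j, w k with hPWdef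
  clear_value PN PD PW
  field_simp [hWc j, hw0 j, Complex.I_ne_zero]
  ring

end AuxStatement9


end EGG
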